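/- Let Y, Ŷ, A, D be random variables with Y, Ŷ taking values in {1,...,K}, A, D in {0,1}, and P(Ŷ = Y | D = 1) = 1. Fix y with p_y⁺ := P(Y=y, A=1) > 0 and p_y⁻ := P(Y=y, A=0) > 0, and set p_y = P(Y=y), p_D = P(D=1), q_y = P(Y=y | D=1), q_y⁺ = P(Y=y, A=1 | D=1), C⁺ = P(Ŷ=y | D=0, Y=y, A=1), C⁻ = P(Ŷ=y | D=0, Y=y, A=0). Then the equal opportunity gap Δeq.opp.(y) := P(Ŷ=y | A=1, Y=y) − P(Ŷ=y | A=0, Y=y) equals (p_D / (p_y⁺(p_y − p_y⁺)))·(C⁺ − 1)·(q_y p_y⁺ − p_y q_y⁺) + (C⁺ − C⁻)·(1 − p_D(q_y − q_y⁺)/(p_y − p_y⁺)). -/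
import Mathlib


open scoped BigOperators Classical

noncomputable def pr {Ω : Type*} [Fintype Ω] (P : Ω → ℝ) (E : Set Ω) : ℝ :=
  ∑ ω, if ω ∈ E then P ω else 0

noncomputable def cpr {Ω : Type*} [Fintype Ω] (P : Ω → ℝ) (E F : Set Ω) : ℝ :=
  pr P (E ∩ F) / pr P F

lemma pr_nonneg {Ω : Type*} [Fintype Ω] {P : Ω → ℝ} (hP0 : ∀ ω, 0 ≤ P ω) (E : Set Ω) :
    0 ≤ pr P E := by
  apply Finset.sum_nonneg; intro ω _
  split <;> first | exact hP0 ω | exact le_rfl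

lemma pr_mono {Ω : Type*} [Fintype Ω] {P : Ω → ℝ} (hP0 : ∀ ω, 0 ≤ P ω) {E F : Set Ω}
    (h : E ⊆ F) : pr P E ≤ pr P F := by
  apply Finset.sum_le_sum; intro ω _
  by_cases hE : ω ∈ E
  · simp [hE, h hE]
  · simp only [hE, if_false]
    split <;> first | exact hP0 ω | exact le_rfl

lemma pr_congr {Ω : Type*} [Fintype Ω] (P : Ω → ℝ) {E F : Set Ω} (h : ∀ ω, ω ∈ E ↔ ω ∈ F) :
    pr P E = pr P F := by
  have : E = F := Set.ext h
  rw [this]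

lemma pr_split {Ω : Type*} [Fintype Ω] (P : Ω → ℝ) (E T : Set Ω) :
    pr P E = pr P (E ∩ T) + pr P (E ∩ Tᶜ) := by
  unfold pr
  rw [← Finset.sum_add_distrib]
  apply Finset.sum_congr rfl
  intro ω _
  by_cases hE : ω ∈ E <;> by_cases hT : ω ∈ T <;> simp [hE, hT]

/-- equal opportunity gap of the memorizing classifier. -/
theorem stmt_1 {Ω : Type*} [Fintype Ω] (P : Ω → ℝ)
    (hP0 : ∀ ω, 0 ≤ P ω) (hP1 : ∑ ω, P ω = 1)
    {K : ℕ} (Y Yh : Ω → Fin K) (A D : Ω → Bool)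
    (hmem : cpr P {ω | Yh ω = Y ω} {ω | D ω = true} = 1)
    (y : Fin K)
    (hD1 : 0 < pr P {ω | D ω = true})
    (hYA1 : 0 < pr P ({ω | Y ω = y} ∩ {ω | A ω = true}))
    (hYA0 : 0 < pr P ({ω | Y ω = y} ∩ {ω | A ω = false}))
    (hD0YA1 : 0 < pr P ({ω | D ω = false} ∩ ({ω | Y ω = y} ∩ {ω | A ω = true})))
    (hD0YA0 : 0 < pr P ({ω | D ω = false} ∩ ({ω | Y ω = y} ∩ {ω | A ω = false})))
    (pD py pyp qy qyp Cp Cm : ℝ)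
    (hpD : pD = pr P {ω | D ω = true})
    (hpy : py = pr P {ω | Y ω = y})
    (hpyp : pyp = pr P ({ω | Y ω = y} ∩ {ω | A ω = true}))
    (hqy : qy = cpr P {ω | Y ω = y} {ω | D ω = true})
    (hqyp : qyp = cpr P ({ω | Y ω = y} ∩ {ω | A ω = true}) {ω | D ω = true})
    (hCp : Cp = cpr P {ω | Yh ω = y} ({ω | D ω = false} ∩ ({ω | Y ω = y} ∩ {ω | A ω = true})))
    (hCm : Cm = cpr P {ω | Yh ω = y} ({ω | D ω = false} ∩ ({ω | Y ω = y} ∩ {ω | A ω = false}))) :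
    cpr P {ω | Yh ω = y} ({ω | A ω = true} ∩ {ω | Y ω = y})
      - cpr P {ω | Yh ω = y} ({ω | A ω = false} ∩ {ω | Y ω = y})
      = pD / (pyp * (py - pyp)) * (Cp - 1) * (qy * pyp - py * qyp)
        + (Cp - Cm) * (1 - pD * (qy - qyp) / (py - pyp)) := by
  classical
  set Yy : Set Ω := {ω | Y ω = y} with hYy
  set A1 : Set Ω := {ω | A ω = true} with hA1
  set A0 : Set Ω := {ω | A ω = false} with hA0
  set Dt : Set Ω := {ω | D ω = true} with hDt
  set Df : Set Ω := {ω | D ω = false} with hDf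
  set M : Set Ω := {ω | Yh ω = Y ω} with hM
  set Hy : Set Ω := {ω | Yh ω = y} with hHy
  -- basic quantities
  set a1 : ℝ := pr P (Dt ∩ (Yy ∩ A1)) with ha1
  set a0 : ℝ := pr P (Dt ∩ (Yy ∩ A0)) with ha0
  set b1 : ℝ := pr P (Df ∩ (Yy ∩ A1)) with hb1
  set b0 : ℝ := pr P (Df ∩ (Yy ∩ A0)) with hb0
  have ha1n : 0 ≤ a1 := pr_nonneg hP0 _
  have ha0n : 0 ≤ a0 := pr_nonneg hP0 _
  have hb1p : 0 < b1 := hD0YA1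
  have hb0p : 0 < b0 := hD0YA0
  -- memorization: pr (Mᶜ ∩ Dt) = 0
  have hmem1 : pr P (M ∩ Dt) = pr P Dt := by
    rw [cpr, div_eq_one_iff_eq hD1.ne'] at hmem
    exact hmem
  have hbad : pr P (Dt ∩ Mᶜ) = 0 := by
    have hs := pr_split P Dt M
    have : pr P (Dt ∩ M) = pr P (M ∩ Dt) := pr_congr P (by intro ω; exact and_comm)
    linarith [hs, this, hmem1]
  -- key: on D = true ∩ Y = y, Yh = y a.s.
  have key : ∀ Aa : Set Ω, pr P (Hy ∩ (Dt ∩ (Yy ∩ Aa))) = pr P (Dt ∩ (Yy ∩ Aa)) := by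
    intro Aa
    have hs := pr_split P (Dt ∩ (Yy ∩ Aa)) Hy
    have h1 : pr P ((Dt ∩ (Yy ∩ Aa)) ∩ Hy) = pr P (Hy ∩ (Dt ∩ (Yy ∩ Aa))) :=
      pr_congr P (by intro ω; exact and_comm)
    have h2 : pr P ((Dt ∩ (Yy ∩ Aa)) ∩ Hyᶜ) = 0 := by
      have hle : pr P ((Dt ∩ (Yy ∩ Aa)) ∩ Hyᶜ) ≤ pr P (Dt ∩ Mᶜ) := by
        apply pr_mono hP0
        intro ω hω
        obtain ⟨⟨hd, hy', _⟩, hne⟩ := hω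
        refine ⟨hd, ?_⟩
        simp only [hM, Set.mem_compl_iff, Set.mem_setOf_eq] at *
        rw [hy']
        exact hne
      have hge : 0 ≤ pr P ((Dt ∩ (Yy ∩ Aa)) ∩ Hyᶜ) := pr_nonneg hP0 _
      linarith [hbad]
    linarith [hs, h1, h2]
  -- Dtᶜ = Df
  have hDfc : ∀ ω : Ω, ω ∈ Dtᶜ ↔ ω ∈ Df := by
    intro ω
    simp [hDt, hDf]
  -- numerator decomposition for a = 1
  have hnum1 : pr P (Hy ∩ (A1 ∩ Yy)) = a1 + Cp * b1 := by
    have hs := pr_split P (Hy ∩ (A1 ∩ Yy)) Dt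
    have h1 : pr P ((Hy ∩ (A1 ∩ Yy)) ∩ Dt) = pr P (Hy ∩ (Dt ∩ (Yy ∩ A1))) :=
      pr_congr P (by intro ω; simp only [Set.mem_inter_iff]; tauto)
    have h2 : pr P ((Hy ∩ (A1 ∩ Yy)) ∩ Dtᶜ) = pr P (Hy ∩ (Df ∩ (Yy ∩ A1))) :=
      pr_congr P (by intro ω; simp only [Set.mem_inter_iff, hDfc ω]; tauto)
    have h3 : Cp * b1 = pr P (Hy ∩ (Df ∩ (Yy ∩ A1))) := by
      rw [hCp, cpr, hb1, div_mul_cancel₀ _ hD0YA1.ne']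
    rw [hs, h1, h2, key A1, ← h3, ha1]
  have hnum0 : pr P (Hy ∩ (A0 ∩ Yy)) = a0 + Cm * b0 := by
    have hs := pr_split P (Hy ∩ (A0 ∩ Yy)) Dt
    have h1 : pr P ((Hy ∩ (A0 ∩ Yy)) ∩ Dt) = pr P (Hy ∩ (Dt ∩ (Yy ∩ A0))) :=
      pr_congr P (by intro ω; simp only [Set.mem_inter_iff]; tauto)
    have h2 : pr P ((Hy ∩ (A0 ∩ Yy)) ∩ Dtᶜ) = pr P (Hy ∩ (Df ∩ (Yy ∩ A0))) :=
      pr_congr P (by intro ω; simp only [Set.mem_inter_iff, hDfc ω]; tauto)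
    have h3 : Cm * b0 = pr P (Hy ∩ (Df ∩ (Yy ∩ A0))) := by
      rw [hCm, cpr, hb0, div_mul_cancel₀ _ hD0YA0.ne']
    rw [hs, h1, h2, key A0, ← h3, ha0]
  -- denominators
  have hden1 : pr P (A1 ∩ Yy) = a1 + b1 := by
    have hs := pr_split P (A1 ∩ Yy) Dt
    have h1 : pr P ((A1 ∩ Yy) ∩ Dt) = a1 :=
      pr_congr P (by intro ω; simp only [Set.mem_inter_iff]; tauto)
    have h2 : pr P ((A1 ∩ Yy) ∩ Dtᶜ) = b1 :=
      pr_congr P (by intro ω; simp only [Set.mem_inter_iff, hDfc ω]; tauto)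
    rw [hs, h1, h2]
  have hden0 : pr P (A0 ∩ Yy) = a0 + b0 := by
    have hs := pr_split P (A0 ∩ Yy) Dt
    have h1 : pr P ((A0 ∩ Yy) ∩ Dt) = a0 :=
      pr_congr P (by intro ω; simp only [Set.mem_inter_iff]; tauto)
    have h2 : pr P ((A0 ∩ Yy) ∩ Dtᶜ) = b0 :=
      pr_congr P (by intro ω; simp only [Set.mem_inter_iff, hDfc ω]; tauto)
    rw [hs, h1, h2]
  -- pyp, py
  have hpyp' : pyp = a1 + b1 := by
    rw [hpyp, ← hden1]
    exact pr_congr P (by intro ω; simp only [Set.mem_inter_iff]; tauto)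
  have hya0 : pr P (Yy ∩ A0) = a0 + b0 := by
    rw [← hden0]
    exact pr_congr P (by intro ω; simp only [Set.mem_inter_iff]; tauto)
  have hpy' : py = (a1 + b1) + (a0 + b0) := by
    have hs := pr_split P Yy A1
    have h1 : pr P (Yy ∩ A1) = a1 + b1 := by rw [← hpyp']; exact hpyp.symm
    have h2 : pr P (Yy ∩ A1ᶜ) = a0 + b0 := by
      rw [← hya0]
      exact pr_congr P (by
        intro ω
        simp only [Set.mem_inter_iff, Set.mem_compl_iff, hA1, hA0, Set.mem_setOf_eq,
          Bool.not_eq_true])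
    rw [hpy, hs, h1, h2]
  -- qy, qyp
  have hqy' : qy * pD = a1 + a0 := by
    rw [hqy, cpr, ← hpD, div_mul_cancel₀ _ (by rw [hpD]; exact hD1.ne')]
    have hs := pr_split P (Yy ∩ Dt) A1
    have h1 : pr P ((Yy ∩ Dt) ∩ A1) = a1 :=
      pr_congr P (by intro ω; simp only [Set.mem_inter_iff]; tauto)
    have h2 : pr P ((Yy ∩ Dt) ∩ A1ᶜ) = a0 :=
      pr_congr P (by
        intro ω
        simp only [Set.mem_inter_iff, Set.mem_compl_iff, hA1, hA0, Set.mem_setOf_eq,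
          Bool.not_eq_true]
        tauto)
    rw [hs, h1, h2]
  have hqyp' : qyp * pD = a1 := by
    rw [hqyp, cpr, ← hpD, div_mul_cancel₀ _ (by rw [hpD]; exact hD1.ne')]
    exact pr_congr P (by intro ω; simp only [Set.mem_inter_iff]; tauto)
  -- assemble
  have hpDpos : (0:ℝ) < pD := by rw [hpD]; exact hD1
  have hp1pos : (0:ℝ) < a1 + b1 := by linarith
  have hp0pos : (0:ℝ) < a0 + b0 := by linarith
  have hqyv : qy = (a1 + a0) / pD := by
    rw [eq_div_iff hpDpos.ne']; exact hqy'
  have hqypv : qyp = a1 / pD := by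
    rw [eq_div_iff hpDpos.ne']; exact hqyp'
  rw [cpr, cpr, hnum1, hnum0, hden1, hden0, hqyv, hqypv, hpy', hpyp']
  have h1 : ((a1 + b1) + (a0 + b0)) - (a1 + b1) = a0 + b0 := by ring
  rw [h1]
  field_simp
  ring
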